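/- Let M : ℓ² → ℓ² be the unilateral shift, H = ℓ² ⊕ ℓ², T₁ = I ⊕ M and T₂ = M ⊕ I. Then there is no unit vector h = (h₁, h₂) ∈ H with ⟨T₁h, h⟩ = 0 and ⟨T₂h, h⟩ = 0; i.e., (0,0) ∉ W(T₁, T₂). -/

import Mathlib

local notation "ℓ²" => lp (fun _ : ℕ => ℂ) 2

open scoped ComplexInnerProductSpace in
lemma shift_strict_cs (M : ℓ² →L[ℂ] ℓ²)
    (hM : ∀ x : ℓ², (M x) 0 = 0 ∧ ∀ n : ℕ, (M x) (n + 1) = x n)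
    (x : ℓ²) (hx : x ≠ 0) : ‖⟪M x, x⟫‖ < ‖x‖ ^ 2 := by
  have hnorm : ‖M x‖ = ‖x‖ := by
    have h1 : ⟪M x, M x⟫ = ⟪x, x⟫ := by
      rw [lp.inner_eq_tsum, lp.inner_eq_tsum]
      rw [Summable.tsum_eq_zero_add (lp.summable_inner (𝕜 := ℂ) (M x) (M x))]
      simp only [(hM x).1, (hM x).2, inner_zero_left, zero_add]
    rw [inner_self_eq_norm_sq_to_K, inner_self_eq_norm_sq_to_K] at h1
    have h2 : ‖M x‖ ^ 2 = ‖x‖ ^ 2 := by exact_mod_cast h1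
    nlinarith [norm_nonneg (M x), norm_nonneg x]
  have hMx : M x ≠ 0 := by
    intro h0
    apply hx
    rw [h0, norm_zero] at hnorm
    exact norm_eq_zero.mp hnorm.symm
  have hle : ‖⟪M x, x⟫‖ ≤ ‖M x‖ * ‖x‖ := norm_inner_le_norm _ _
  rw [hnorm, ← sq] at hle
  rcases lt_or_eq_of_le hle with h | h
  · exact h
  · exfalso
    have h' : ‖⟪M x, x⟫‖ = ‖M x‖ * ‖x‖ := by rw [hnorm, ← sq]; exact h
    obtain ⟨r, hr, hxr⟩ := (norm_inner_eq_norm_iff hMx hx).mp h'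
    apply hx
    have hcoef : ∀ n, x n = r * (M x) n := by
      intro n
      conv_lhs => rw [hxr]
      simp [lp.coeFn_smul]
    have hzero : ∀ n, x n = 0 := by
      intro n
      induction n with
      | zero => rw [hcoef 0, (hM x).1, mul_zero]
      | succ k ih => rw [hcoef (k + 1), (hM x).2 k, ih, mul_zero]
    exact lp.ext (funext fun n => by simpa using hzero n)

open scoped ComplexInnerProductSpace in
/-- For the unilateral shift `M` on `ℓ²` and `T₁ = I ⊕ M`, `T₂ = M ⊕ I` on
`H = ℓ² ⊕ ℓ²`, there is no unit vector `h = (h₁, h₂)` with `⟨T₁ h, h⟩ = 0` and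
`⟨T₂ h, h⟩ = 0`; i.e. `(0,0) ∉ W(T₁, T₂)`. -/
theorem shift_pair_zero_not_in_joint_numerical_range
    (M : ℓ² →L[ℂ] ℓ²)
    (hM : ∀ x : ℓ², (M x) 0 = 0 ∧ ∀ n : ℕ, (M x) (n + 1) = x n) :
    ¬ ∃ h₁ h₂ : ℓ², (‖h₁‖ ^ 2 + ‖h₂‖ ^ 2 = 1) ∧
      ⟪h₁, h₁⟫ + ⟪M h₂, h₂⟫ = 0 ∧ ⟪M h₁, h₁⟫ + ⟪h₂, h₂⟫ = 0 := by
  rintro ⟨h₁, h₂, hnorm, e1, e2⟩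
  have k1 : ⟪h₁, h₁⟫ = -⟪M h₂, h₂⟫ := by linear_combination e1
  have k2 : ⟪h₂, h₂⟫ = -⟪M h₁, h₁⟫ := by linear_combination e2
  have n1 : ‖h₁‖ ^ 2 = ‖⟪M h₂, h₂⟫‖ :=
    calc ‖h₁‖ ^ 2 = ‖⟪h₁, h₁⟫‖ := by
          rw [inner_self_eq_norm_sq_to_K (𝕜 := ℂ)]; simp
      _ = ‖⟪M h₂, h₂⟫‖ := by rw [k1, norm_neg]
  have n2 : ‖h₂‖ ^ 2 = ‖⟪M h₁, h₁⟫‖ :=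
    calc ‖h₂‖ ^ 2 = ‖⟪h₂, h₂⟫‖ := by
          rw [inner_self_eq_norm_sq_to_K (𝕜 := ℂ)]; simp
      _ = ‖⟪M h₁, h₁⟫‖ := by rw [k2, norm_neg]
  by_cases hz1 : h₁ = 0
  · have hz2 : h₂ ≠ 0 := by
      intro hz2; rw [hz1, hz2] at hnorm; simp at hnorm
    rw [hz1] at n2
    simp at n2
    exact hz2 n2
  · by_cases hz2 : h₂ = 0
    · rw [hz2] at n1
      simp at n1
      exact hz1 n1
    · have c1 : ‖h₁‖ ^ 2 < ‖h₂‖ ^ 2 := n1 ▸ shift_strict_cs M hM h₂ hz2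
      have c2 : ‖h₂‖ ^ 2 < ‖h₁‖ ^ 2 := n2 ▸ shift_strict_cs M hM h₁ hz1
      linarith
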